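/- For every subset E of [m], the subspace L_E of tables depending only on coordinates in E equals the span of the incremental subspaces N_F over all subsets F of E: L_E = Σ_{F⊂E} N_F. -/

import Mathlib

open Finset

namespace Hier

variable {m : ℕ}

abbrev Cell (I : Fin m → ℕ) := ∀ j, Fin (I j)

variable (I : Fin m → ℕ)

/-- standard inner product on ℚ^I -/
def dot (x y : Cell I → ℚ) : ℚ := ∑ i, x i * y i

/-- L_E: tables depending only on the coordinates in E -/
def LL (E : Finset (Fin m)) : Submodule ℚ (Cell I → ℚ) where
  carrier := {x | ∀ i i' : Cell I, (∀ j ∈ E, i j = i' j) → x i = x i'}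
  zero_mem' := by intro i i' _; rfl
  add_mem' := by
    intro a b ha hb i i' h
    simp only [Pi.add_apply, ha i i' h, hb i i' h]
  smul_mem' := by
    intro c a ha i i' h
    simp only [Pi.smul_apply, ha i i' h]

/-- orthogonal complement w.r.t. the standard inner product -/
def perp (S : Submodule ℚ (Cell I → ℚ)) : Submodule ℚ (Cell I → ℚ) where
  carrier := {y | ∀ x ∈ S, dot I x y = 0}
  zero_mem' := by intro x hx; simp [dot]
  add_mem' := by
    intro a b ha hb x hx
    have h1 := ha x hx
    have h2 := hb x hx
    simp only [dot, Pi.add_apply, mul_add, Finset.sum_add_distrib] at *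
    rw [h1, h2]; ring
  smul_mem' := by
    intro c a ha x hx
    have h1 := ha x hx
    simp only [dot, Pi.smul_apply, smul_eq_mul] at *
    calc ∑ i, x i * (c * a i) = c * ∑ i, x i * a i := by
          rw [Finset.mul_sum]; congr 1; funext i; ring
      _ = 0 := by rw [h1]; ring

/-- incremental subspace N_E -/
def NN (E : Finset (Fin m)) : Submodule ℚ (Cell I → ℚ) :=
  LL I E ⊓ perp I (⨆ j ∈ E, LL I (E.erase j))

/-- F-marginal of x evaluated at the marginal cell i_F -/
def marg (x : Cell I → ℚ) (F : Finset (Fin m)) (i : Cell I) : ℚ :=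
  ∑ j : Cell I, if ∀ k ∈ F, j k = i k then x j else 0

/-- kernel of the configuration determined by a family of facets:
tables all of whose F-marginals vanish, F ∈ Fs -/
def kern (Fs : Finset (Finset (Fin m))) : Submodule ℚ (Cell I → ℚ) where
  carrier := {y | ∀ F ∈ Fs, ∀ i, marg I y F i = 0}
  zero_mem' := by intro F hF i; simp [marg]
  add_mem' := by
    intro a b ha hb F hF i
    have h1 := ha F hF i
    have h2 := hb F hF i
    simp only [marg, Pi.add_apply] at *
    have key : (∑ j : Cell I, if ∀ k ∈ F, j k = i k then a j + b j else 0)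
        = (∑ j : Cell I, if ∀ k ∈ F, j k = i k then a j else 0)
          + (∑ j : Cell I, if ∀ k ∈ F, j k = i k then b j else 0) := by
      rw [← Finset.sum_add_distrib]
      apply Finset.sum_congr rfl
      intro j _
      split <;> simp
    rw [key, h1, h2]; ring
  smul_mem' := by
    intro c a ha F hF i
    have h1 := ha F hF i
    simp only [marg, Pi.smul_apply, smul_eq_mul] at *
    calc ∑ j : Cell I, (if ∀ k ∈ F, j k = i k then c * a j else 0)
        = c * ∑ j : Cell I, (if ∀ k ∈ F, j k = i k then a j else 0) := by
          rw [Finset.mul_sum]; congr 1; funext j; split <;> simp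
      _ = 0 := by rw [h1]; ring

/-- a (finite) abstract simplicial complex on [m] -/
def IsComplex (Δ : Finset (Finset (Fin m))) : Prop :=
  ∀ F ∈ Δ, ∀ F' ⊆ F, F' ∈ Δ

/-- the maximal elements (facets) of Δ -/
def facets (Δ : Finset (Finset (Fin m))) : Finset (Finset (Fin m)) :=
  Δ.filter (fun D => ∀ F ∈ Δ, D ⊆ F → F = D)

/-- row space of the hierarchical-model configuration A_Δ -/
def rowsp (Δ : Finset (Finset (Fin m))) : Submodule ℚ (Cell I → ℚ) :=
  ⨆ D ∈ facets Δ, LL I D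

/-- single partial difference operator ∂_j -/
def pd1 (hI : ∀ j, 0 < I j) (j : Fin m) (x : Cell I → ℚ) : Cell I → ℚ :=
  fun i => x i - x (Function.update i j ⟨0, hI j⟩)

/-- ∂_E: composition of the (commuting) ∂_j, j ∈ E -/
noncomputable def pdE (hI : ∀ j, 0 < I j) (E : Finset (Fin m)) : (Cell I → ℚ) → (Cell I → ℚ) :=
  E.toList.foldr (fun j f => pd1 I hI j ∘ f) id


/-- the dot product as a bilinear form -/
def dotB : LinearMap.BilinForm ℚ (Cell I → ℚ) :=
  LinearMap.mk₂ ℚ (dot I)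
    (by intro x x' y; simp [dot, add_mul, Finset.sum_add_distrib])
    (by intro c x y; simp [dot, Finset.mul_sum, mul_assoc])
    (by intro x y y'; simp [dot, mul_add, Finset.sum_add_distrib])
    (by intro c x y; simp [dot, Finset.mul_sum, mul_left_comm])

lemma dotB_apply (x y : Cell I → ℚ) : dotB I x y = dot I x y := rfl

lemma dotB_isRefl : (dotB I).IsRefl := by
  intro x y h
  simpa [dotB_apply, dot, mul_comm] using h

lemma perp_eq_orthogonal (S : Submodule ℚ (Cell I → ℚ)) :
    perp I S = (dotB I).orthogonal S := rfl

lemma dotB_restrict_nondegenerate (W : Submodule ℚ (Cell I → ℚ)) :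
    ((dotB I).restrict W).Nondegenerate := by
  refine ⟨?_, ?_⟩
  all_goals
    intro ⟨x, hx⟩ h
    have hxx : dot I x x = 0 := h ⟨x, hx⟩
    have hz : ∀ i ∈ Finset.univ, x i * x i = 0 := by
      simp only [dot] at hxx
      rw [Finset.sum_eq_zero_iff_of_nonneg (fun i _ => mul_self_nonneg (x i))] at hxx
      exact hxx
    have : x = 0 := by
      funext i
      have := hz i (Finset.mem_univ i)
      exact mul_self_eq_zero.mp this
    exact Subtype.ext this

/-- orthogonal decomposition within a subspace -/
lemma decomp (M L : Submodule ℚ (Cell I → ℚ)) (hML : M ≤ L) :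
    L = M ⊔ (L ⊓ perp I M) := by
  have hc : IsCompl M ((dotB I).orthogonal M) :=
    LinearMap.BilinForm.isCompl_orthogonal_of_restrict_nondegenerate
      (dotB_isRefl I) (dotB_restrict_nondegenerate I M)
  apply le_antisymm
  · intro x hxL
    have hx : x ∈ M ⊔ (dotB I).orthogonal M := by
      rw [hc.sup_eq_top]; trivial
    obtain ⟨a, ha, b, hb, hab⟩ := Submodule.mem_sup.mp hx
    have hbL : b ∈ L := by
      have : b = x - a := by rw [← hab]; ring
      rw [this]; exact L.sub_mem hxL (hML ha)
    exact Submodule.mem_sup.mpr ⟨a, ha, b, ⟨hbL, hb⟩, hab⟩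
  · exact sup_le hML inf_le_left

lemma LL_mono {F E : Finset (Fin m)} (h : F ⊆ E) : LL I F ≤ LL I E := by
  intro x hx i i' hii'
  exact hx i i' fun j hj => hii' j (h hj)

/-- Lemma 2 (3): `L_E = Σ_{F ⊆ E} N_F`. -/
theorem stmt6 (hI : ∀ j, 2 ≤ I j) (E : Finset (Fin m)) :
    LL I E = ⨆ F ∈ E.powerset, NN I F := by
  induction E using Finset.strongInduction with
  | _ E ih =>
    have hM : (⨆ j ∈ E, LL I (E.erase j)) ≤ LL I E :=
      iSup_le fun j => iSup_le fun _ => LL_mono I (Finset.erase_subset j E)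
    apply le_antisymm
    · have hdec := (decomp I (⨆ j ∈ E, LL I (E.erase j)) (LL I E) hM).le
      refine hdec.trans (sup_le ?_ ?_)
      · refine iSup_le fun j => iSup_le fun hj => ?_
        rw [ih (E.erase j) (Finset.erase_ssubset hj)]
        refine iSup_le fun F => iSup_le fun hF => ?_
        have hFE : F ∈ E.powerset :=
          Finset.mem_powerset.mpr
            ((Finset.mem_powerset.mp hF).trans (Finset.erase_subset j E))
        exact le_iSup_of_le F (le_iSup_of_le hFE le_rfl)
      · show NN I E ≤ _
        exact le_iSup_of_le E
          (le_iSup_of_le (Finset.mem_powerset.mpr Finset.Subset.rfl) le_rfl)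
    · refine iSup_le fun F => iSup_le fun hF => ?_
      exact inf_le_left.trans (LL_mono I (Finset.mem_powerset.mp hF))

end Hier
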